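/- Let ℬ be a lax contravariant lens over a reflexive graph 𝒜. If each component ℬ(x) is univalent, then the display d⁻ℬ is a univalent displayed reflexive graph over 𝒜. -/

import Mathlib

/-- A reflexive graph: a type of vertices, a family of edge types, and
reflexivity data. -/
structure RxGraph where
  V : Type*
  Edge : V → V → Type*
  rx : ∀ x, Edge x x

/-- The fan of a vertex `x`: vertices equipped with an edge from `x`. -/
def RxGraph.Fan (A : RxGraph) (x : A.V) : Type _ :=
  Σ y, A.Edge x y

/-- The co-fan of a vertex `x`: vertices equipped with an edge toward `x`. -/
def RxGraph.CoFan (A : RxGraph) (x : A.V) : Type _ :=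
  Σ y, A.Edge y x

/-- A reflexive graph is univalent (a path object) when every fan is a
subsingleton. -/
def RxGraph.Univalent (A : RxGraph) : Prop :=
  ∀ x, Subsingleton (A.Fan x)

/-- A displayed reflexive graph over a reflexive graph `A`. -/
structure DispRxGraph (A : RxGraph) where
  V : A.V → Type*
  Edge : ∀ {x y : A.V}, A.Edge x y → V x → V y → Type*
  drx : ∀ (x : A.V) (u : V x), Edge (A.rx x) u u

/-- The component of a displayed reflexive graph at a vertex. -/
def DispRxGraph.component {A : RxGraph} (B : DispRxGraph A) (x : A.V) :
    RxGraph where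
  V := B.V x
  Edge := fun u v => B.Edge (A.rx x) u v
  rx := fun u => B.drx x u

/-- A displayed reflexive graph is univalent (a displayed path object) when
each of its components is univalent. -/
def DispRxGraph.Univalent {A : RxGraph} (B : DispRxGraph A) : Prop :=
  ∀ x, (B.component x).Univalent

/-- A lax contravariant lens over a reflexive graph `A`: a family of reflexive
graphs indexed in vertices, equipped with pullback operations along edges
and a lax unitor. -/
structure CtrvLens (A : RxGraph) where
  B : A.V → RxGraph.{u_3, u_4}
  pull : ∀ {x y : A.V}, A.Edge x y → (B y).V → (B x).V
  pullRx : ∀ (x : A.V) (u : (B x).V), (B x).Edge u (pull (A.rx x) u)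

/-- The display of a lax contravariant lens. -/
def CtrvLens.disp {A : RxGraph} (L : CtrvLens A) : DispRxGraph A where
  V := fun x => (L.B x).V
  Edge := fun {x _} p u v => (L.B x).Edge u (L.pull p v)
  drx := fun x u => L.pullRx x u

/-- If each component of a lax contravariant lens is univalent then its
display is a univalent displayed reflexive graph. -/
theorem ctrvLens_disp_univalent {A : RxGraph} (L : CtrvLens A)
    (h : ∀ x, (L.B x).Univalent) : L.disp.Univalent := by
  intro x u
  constructor
  rintro ⟨v₁, e₁⟩ ⟨v₂, e₂⟩
  have hv : ∀ v : (L.B x).V, v = L.pull (A.rx x) v := by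
    intro v
    have := @Subsingleton.elim _ (h x v)
      (⟨v, (L.B x).rx v⟩ : (L.B x).Fan v) ⟨L.pull (A.rx x) v, L.pullRx x v⟩
    exact congrArg Sigma.fst this
  have h2 : (⟨L.pull (A.rx x) v₁, e₁⟩ : (L.B x).Fan u) = ⟨L.pull (A.rx x) v₂, e₂⟩ :=
    @Subsingleton.elim _ (h x u) _ _
  obtain ⟨hfst, hsnd⟩ := Sigma.mk.inj_iff.mp h2
  have hv12 : v₁ = v₂ := (hv v₁).trans (hfst.trans (hv v₂).symm)
  subst hv12
  have : e₁ = e₂ := eq_of_heq hsnd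
  rw [this]
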